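/- Let u be a real C² function on ℝ^{4n} ≅ ℍⁿ and q ∈ ℝ^{4n}. Suppose there exist 𝓔 ∈ U_ℍ(n) and real numbers ν₀,…,ν_{n−1} such that 𝓔*·H_u(q)·𝓔 = diag(ν₀,…,ν_{n−1}), where H_u(q) is the quaternionic Hessian of u at q. Then the n-fold exterior power of the Baston operator satisfies (Δu(q))∧⋯∧(Δu(q)) = n!·(ν₀⋯ν_{n−1})·Ω_{2n}. (The number ν₀⋯ν_{n−1} equals the Moore determinant of the quaternionic Hessian, so (Δu)^n = n!·det(H_u)·Ω_{2n}.) -/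

import Mathlib

open scoped Quaternion
open Matrix Sum

noncomputable section

/-- The complex part `a` in the decomposition `q = a + b·j` of a quaternion. -/
def qa (q : ℍ[ℝ]) : ℂ := ⟨q.re, q.imI⟩

/-- The complex part `b` in the decomposition `q = a + b·j` of a quaternion. -/
def qb (q : ℍ[ℝ]) : ℂ := ⟨q.imJ, q.imK⟩

/-- Entrywise complex conjugation of a complex matrix. -/
def conjM {m k : Type*} (M : Matrix m k ℂ) : Matrix m k ℂ := M.map (starRingEnd ℂ)

/-- The embedding τ : M_ℍ(p,m) → M_ℂ(2p,2m), τ(a + b·j) = [[a, −b],[conj b, conj a]]. -/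
def tau {p m : ℕ} (M : Matrix (Fin p) (Fin m) ℍ[ℝ]) :
    Matrix (Fin p ⊕ Fin p) (Fin m ⊕ Fin m) ℂ :=
  Matrix.fromBlocks (M.map qa) (-(M.map qb)) (conjM (M.map qb)) (conjM (M.map qa))

/-- The standard symplectic matrix J = [[0, Iₙ],[−Iₙ, 0]]. -/
def Jmat (n : ℕ) : Matrix (Fin n ⊕ Fin n) (Fin n ⊕ Fin n) ℂ :=
  Matrix.fromBlocks 0 1 (-1) 0

/-- index set {0,…,2n−1}, as two blocks. -/
abbrev Idx (n : ℕ) := Fin n ⊕ Fin n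

/-- ℂ^{2n}. -/
abbrev Vc (n : ℕ) := Idx n → ℂ

/-- The exterior algebra of ℂ^{2n}. -/
abbrev EA (n : ℕ) := ExteriorAlgebra ℂ (Vc n)

/-- Basis 1-vectors ω^A of the exterior algebra. -/
def ω {n : ℕ} (A : Idx n) : EA n := ExteriorAlgebra.ι ℂ (Pi.single A 1)

/-- Ω_{2n} = ω⁰∧ω^n∧ω¹∧ω^{n+1}∧…∧ω^{n−1}∧ω^{2n−1}. -/
def Ωn (n : ℕ) : EA n := (List.ofFn fun l : Fin n => ω (inl l) * ω (inr l)).prod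

/-- β_n = Σ_l ω^l∧ω^{n+l}. -/
def βn (n : ℕ) : EA n := ∑ l : Fin n, ω (inl l) * ω (inr l)

/-- Induced action of a 2n×2n complex matrix on the exterior algebra,
determined by N.ω^A = Σ_B N_{AB} ω^B. -/
def actE {n : ℕ} (N : Matrix (Idx n) (Idx n) ℂ) : EA n →ₐ[ℂ] EA n :=
  ExteriorAlgebra.map (Matrix.mulVecLin Nᵀ)

/-- ℝ^{4n}. -/
abbrev V4 (n : ℕ) := Fin (4 * n) → ℝ

/-- The coordinate index 4l+β. -/
def X {n : ℕ} (l : Fin n) (β : Fin 4) : Fin (4 * n) :=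
  ⟨4 * l.val + β.val, by have h1 := l.isLt; have h2 := β.isLt; omega⟩

/-- Partial derivative of a complex-valued function on ℝ^{4n}. -/
def pd {n : ℕ} (a : Fin (4 * n)) (f : V4 n → ℂ) : V4 n → ℂ :=
  fun q => fderiv ℝ f q (Pi.single a 1)

/-- The operators ∇_{Aα}, α = 0' (α=0) or 1' (α=1). -/
def nabla {n : ℕ} (A : Idx n) (α : Fin 2) (f : V4 n → ℂ) : V4 n → ℂ :=
  fun q =>
    match A with
    | Sum.inl l =>
        if α = 0 then pd (X l 0) f q + Complex.I * pd (X l 1) f q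
        else -pd (X l 2) f q - Complex.I * pd (X l 3) f q
    | Sum.inr l =>
        if α = 0 then pd (X l 2) f q - Complex.I * pd (X l 3) f q
        else pd (X l 0) f q - Complex.I * pd (X l 1) f q

/-- ∇_{Aα} applied to a real-valued function. -/
def nablaR {n : ℕ} (A : Idx n) (α : Fin 2) (u : V4 n → ℝ) : V4 n → ℂ :=
  nabla A α (fun x => ((u x : ℝ) : ℂ))

/-- Δ_{AB}u = ½(∇_{A0'}∇_{B1'}u − ∇_{B0'}∇_{A1'}u). -/
def Delta {n : ℕ} (A B : Idx n) (u : V4 n → ℝ) : V4 n → ℂ :=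
  fun q => (1 / 2 : ℂ) *
    (nabla A 0 (nabla B 1 (fun x => ((u x : ℝ) : ℂ))) q
      - nabla B 0 (nabla A 1 (fun x => ((u x : ℝ) : ℂ))) q)

/-- The Baston operator Δu = Σ_{A,B} Δ_{AB}u · ω^A∧ω^B. -/
def Baston {n : ℕ} (u : V4 n → ℝ) (q : V4 n) : EA n :=
  ∑ A : Idx n, ∑ B : Idx n, Delta A B u q • (ω A * ω B)

/-- The quaternion units. -/
def iH : ℍ[ℝ] := ⟨0, 1, 0, 0⟩
def jH : ℍ[ℝ] := ⟨0, 0, 1, 0⟩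
def kH : ℍ[ℝ] := ⟨0, 0, 0, 1⟩

/-- Partial derivative of a quaternion-valued function on ℝ^{4n}. -/
def pdH {n : ℕ} (a : Fin (4 * n)) (f : V4 n → ℍ[ℝ]) : V4 n → ℍ[ℝ] :=
  fun q => fderiv ℝ f q (Pi.single a 1)

/-- Partial derivative of a real-valued function on ℝ^{4n}. -/
def pdR {n : ℕ} (a : Fin (4 * n)) (f : V4 n → ℝ) : V4 n → ℝ :=
  fun q => fderiv ℝ f q (Pi.single a 1)

/-- ∂u/∂q_k = (∂_{x_{4k}} − i∂_{x_{4k+1}} − j∂_{x_{4k+2}} − k∂_{x_{4k+3}})u for real u. -/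
def dq {n : ℕ} (k : Fin n) (u : V4 n → ℝ) : V4 n → ℍ[ℝ] :=
  fun q => ⟨pdR (X k 0) u q, -pdR (X k 1) u q, -pdR (X k 2) u q, -pdR (X k 3) u q⟩

/-- ∂/∂q̄_l = ∂_{x_{4l}} + i∂_{x_{4l+1}} + j∂_{x_{4l+2}} + k∂_{x_{4l+3}} on ℍ-valued functions. -/
def dqbar {n : ℕ} (l : Fin n) (f : V4 n → ℍ[ℝ]) : V4 n → ℍ[ℝ] :=
  fun q => pdH (X l 0) f q + iH * pdH (X l 1) f q + jH * pdH (X l 2) f q + kH * pdH (X l 3) f q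

/-- The quaternionic Hessian of a real function u. -/
def Hess {n : ℕ} (u : V4 n → ℝ) (q : V4 n) : Matrix (Fin n) (Fin n) ℍ[ℝ] :=
  Matrix.of fun l k => dqbar l (dq k u) q

/-- ω^I = ω^{i₁}∧…∧ω^{i_p} for a multi-index I. -/
def ωProd {n p : ℕ} (I : Fin p → Idx n) : EA n :=
  (List.ofFn fun j => ω (I j)).prod

/-- The Λ^pℂ^{2n}-valued function with coefficient functions f: F = Σ_I f_I ω^I. -/
def formVal {n p : ℕ} (f : (Fin p → Idx n) → V4 n → ℂ) (q : V4 n) : EA n :=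
  ∑ I : Fin p → Idx n, f I q • ωProd I

/-- Coefficients of d_α F for F with coefficients f:
d_αF = Σ_{A,I} ∇_{Aα}f_I · ω^A∧ω^I. -/
def dcoef {n p : ℕ} (α : Fin 2) (f : (Fin p → Idx n) → V4 n → ℂ) :
    (Fin (p + 1) → Idx n) → V4 n → ℂ :=
  fun J => nabla (J 0) α (f (Fin.tail J))

/-- Coefficients of the wedge product F∧G. -/
def wedgeCoef {n p q : ℕ} (f : (Fin p → Idx n) → V4 n → ℂ)
    (g : (Fin q → Idx n) → V4 n → ℂ) : (Fin (p + q) → Idx n) → V4 n → ℂ :=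
  fun J x => f (fun i => J (Fin.castAdd q i)) x * g (fun i => J (Fin.natAdd p i)) x

/-- The complex coordinate functions z^{Aα}. -/
def zc {n : ℕ} (A : Idx n) (α : Fin 2) : V4 n → ℂ :=
  fun x =>
    match A with
    | Sum.inl l => if α = 0 then ⟨x (X l 0), -x (X l 1)⟩ else ⟨-x (X l 2), x (X l 3)⟩
    | Sum.inr l => if α = 0 then ⟨x (X l 2), x (X l 3)⟩ else ⟨x (X l 0), x (X l 1)⟩

/-- The quaternionic vector associated to a point of ℝ^{4n}. -/
def quatv {n : ℕ} (v : V4 n) : Fin n → ℍ[ℝ] :=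
  fun l => ⟨v (X l 0), v (X l 1), v (X l 2), v (X l 3)⟩

/-- The four real components of a quaternion. -/
def comp4 (q : ℍ[ℝ]) : Fin 4 → ℝ := ![q.re, q.imI, q.imJ, q.imK]

/-- The real-linear action of a quaternionic matrix 𝓤 on ℝ^{4n} ≅ ℍⁿ, q ↦ 𝓤q. -/
def act {n : ℕ} (U : Matrix (Fin n) (Fin n) ℍ[ℝ]) (v : V4 n) : V4 n :=
  fun a => comp4 ((U *ᵥ quatv v) ⟨a.val / 4, by have := a.isLt; omega⟩)
    ⟨a.val % 4, by omega⟩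


section ExtPart

variable {n : ℕ}

lemma omega_anticomm (A B : Idx n) : ω A * ω B = -(ω B * ω A) := by
  have h := ExteriorAlgebra.ι_add_mul_swap (R := ℂ)
    (Pi.single A 1 : Vc n) (Pi.single B 1)
  exact eq_neg_of_add_eq_zero_left h

lemma omega_sq (A : Idx n) : ω A * ω A = 0 := ExteriorAlgebra.ι_sq_zero _

/-- The 2-vector attached to a coefficient matrix. -/
def Phi (C : Matrix (Idx n) (Idx n) ℂ) : EA n :=
  ∑ A : Idx n, ∑ B : Idx n, C A B • (ω A * ω B)

lemma Phi_smul (c : ℂ) (C : Matrix (Idx n) (Idx n) ℂ) : Phi (c • C) = c • Phi C := by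
  simp [Phi, Finset.smul_sum, smul_smul, Matrix.smul_apply]

lemma Phi_sub (C C' : Matrix (Idx n) (Idx n) ℂ) : Phi (C - C') = Phi C - Phi C' := by
  simp [Phi, sub_smul, Finset.sum_sub_distrib]

lemma Phi_transpose (C : Matrix (Idx n) (Idx n) ℂ) : Phi Cᵀ = -Phi C := by
  unfold Phi
  rw [Finset.sum_comm]
  simp only [Matrix.transpose_apply]
  rw [← Finset.sum_neg_distrib]
  refine Finset.sum_congr rfl fun B _ => ?_
  rw [← Finset.sum_neg_distrib]
  refine Finset.sum_congr rfl fun A _ => ?_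
  rw [omega_anticomm, smul_neg]

lemma Phi_eq_of_antisymm (C C' : Matrix (Idx n) (Idx n) ℂ) (h : C - Cᵀ = C' - C'ᵀ) :
    Phi C = Phi C' := by
  have h1 : Phi (C - Cᵀ) = Phi C + Phi C := by
    rw [Phi_sub, Phi_transpose, sub_neg_eq_add]
  have h2 : Phi (C' - C'ᵀ) = Phi C' + Phi C' := by
    rw [Phi_sub, Phi_transpose, sub_neg_eq_add]
  have h3 : Phi C + Phi C = Phi C' + Phi C' := by rw [← h1, ← h2, h]
  have h4 : (2 : ℂ) • Phi C = (2 : ℂ) • Phi C' := by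
    rw [two_smul, two_smul]; exact h3
  have := smul_right_injective (EA n) (by norm_num : (2:ℂ) ≠ 0) h4
  exact this

lemma actE_omega (N : Matrix (Idx n) (Idx n) ℂ) (A : Idx n) :
    actE N (ω A) = ∑ B : Idx n, N A B • ω B := by
  unfold actE ω
  rw [ExteriorAlgebra.map_apply_ι]
  have hv : (Matrix.mulVecLin Nᵀ) (Pi.single A 1) = fun B => N A B := by
    ext B
    simp [Matrix.mulVecLin_apply, Matrix.mulVec_single]
  rw [hv]
  have : (fun B => N A B) = ∑ B : Idx n, Pi.single B (N A B) := by
    rw [Finset.univ_sum_single]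
  rw [this, map_sum]
  refine Finset.sum_congr rfl fun B _ => ?_
  have h2 : Pi.single B (N A B) = N A B • (Pi.single B 1 : Vc n) := by
    rw [← Pi.single_smul, smul_eq_mul, mul_one]
  rw [h2, _root_.map_smul]

lemma sum4_comm {M : Type*} [AddCommMonoid M] (f : Idx n → Idx n → Idx n → Idx n → M) :
    ∑ A : Idx n, ∑ B : Idx n, ∑ C : Idx n, ∑ D : Idx n, f A B C D
      = ∑ C : Idx n, ∑ D : Idx n, ∑ A : Idx n, ∑ B : Idx n, f A B C D :=
  calc ∑ A : Idx n, ∑ B : Idx n, ∑ C : Idx n, ∑ D : Idx n, f A B C D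
      = ∑ A : Idx n, ∑ C : Idx n, ∑ B : Idx n, ∑ D : Idx n, f A B C D :=
        Finset.sum_congr rfl fun _ _ => Finset.sum_comm
    _ = ∑ C : Idx n, ∑ A : Idx n, ∑ B : Idx n, ∑ D : Idx n, f A B C D := Finset.sum_comm
    _ = ∑ C : Idx n, ∑ A : Idx n, ∑ D : Idx n, ∑ B : Idx n, f A B C D :=
        Finset.sum_congr rfl fun _ _ => Finset.sum_congr rfl fun _ _ => Finset.sum_comm
    _ = ∑ C : Idx n, ∑ D : Idx n, ∑ A : Idx n, ∑ B : Idx n, f A B C D :=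
        Finset.sum_congr rfl fun _ _ => Finset.sum_comm

lemma actE_Phi (N : Matrix (Idx n) (Idx n) ℂ) (C : Matrix (Idx n) (Idx n) ℂ) :
    actE N (Phi C) = Phi (Nᵀ * C * N) := by
  unfold Phi
  rw [map_sum]
  simp only [map_sum, _root_.map_smul, _root_.map_mul, actE_omega, Finset.sum_mul_sum, Finset.smul_sum,
    smul_mul_smul_comm, smul_smul]
  rw [sum4_comm]
  refine Finset.sum_congr rfl fun C' _ => ?_
  refine Finset.sum_congr rfl fun D _ => ?_
  rw [Finset.sum_congr rfl fun (A : Idx n) (_ : A ∈ Finset.univ) => (Finset.sum_smul).symm,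
    ← Finset.sum_smul]
  congr 1
  rw [Matrix.mul_apply]
  rw [Finset.sum_comm]
  refine Finset.sum_congr rfl fun A _ => ?_
  rw [Matrix.mul_apply, Finset.sum_mul]
  refine Finset.sum_congr rfl fun B _ => ?_
  rw [Matrix.transpose_apply]
  ring

lemma list_mul_eq_zero {R : Type*} [Ring R] (z : R) (hz : z * z = 0) :
    ∀ L : List R, (∀ w ∈ L, Commute z w) → z ∈ L → z * L.prod = 0 := by
  intro L
  induction L with
  | nil => simp
  | cons a t ih =>
    intro hc hm
    rw [List.prod_cons, ← mul_assoc]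
    rcases List.mem_cons.mp hm with h | h
    · rw [← h, hz, zero_mul]
    · have hca : z * a = a * z := hc a List.mem_cons_self
      rw [hca, mul_assoc, ih (fun w hw => hc w (List.mem_cons_of_mem a hw)) h, mul_zero]

lemma sum_pow_eq_factorial_smul {R : Type*} [Ring R] :
    ∀ (m : ℕ) (y : Fin m → R), (∀ i j, Commute (y i) (y j)) → (∀ i, y i * y i = 0) →
    (∑ i, y i) ^ m = m.factorial • (List.ofFn y).prod := by
  intro m
  induction m with
  | zero => intro y _ _; simp
  | succ m ih =>
    intro y hc hz
    have hT := ih (fun i => y i.succ) (fun i j => hc _ _) (fun i => hz _)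
    set T := (List.ofFn fun i : Fin m => y i.succ).prod with hTdef
    set S := ∑ i : Fin m, y i.succ with hSdef
    have hcom : Commute (y 0) S :=
      Commute.sum_right _ _ _ (fun i _ => hc 0 i.succ)
    rw [Fin.sum_univ_succ, hcom.add_pow]
    rw [Finset.sum_range_succ', Finset.sum_range_succ']
    have hzero : ∀ k, y 0 ^ (k + 1 + 1) * S ^ (m + 1 - (k + 1 + 1)) * ((m+1).choose (k+1+1) : R) = 0 := by
      intro k
      have h0 : y 0 ^ (k + 1 + 1) = 0 := by
        have h1 : y 0 ^ (k + 1 + 1) = y 0 ^ k * (y 0 * y 0) := by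
          rw [pow_succ, pow_succ, mul_assoc]
        rw [h1, hz, mul_zero]
      rw [h0, zero_mul, zero_mul]
    rw [Finset.sum_congr rfl (fun k _ => hzero k), Finset.sum_const_zero, zero_add]
    have hS1 : S ^ (m + 1) = 0 := by
      rw [pow_succ', hT, mul_smul_comm, hSdef, Finset.sum_mul]
      have : ∀ i ∈ (Finset.univ : Finset (Fin m)), y i.succ * T = 0 := by
        intro i _
        apply list_mul_eq_zero _ (hz i.succ)
        · intro w hw
          obtain ⟨j, rfl⟩ := List.mem_ofFn.mp hw
          exact hc _ _
        · exact List.mem_ofFn.mpr ⟨i, rfl⟩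
      rw [Finset.sum_congr rfl this, Finset.sum_const_zero, smul_zero]
    have e1 : m + 1 - 1 = m := rfl
    have e0 : m + 1 - 0 = m + 1 := rfl
    rw [e0, e1, hS1, pow_zero, one_mul, zero_mul, add_zero, zero_add, pow_one]
    rw [hT, List.ofFn_succ, List.prod_cons]
    have hch : ((m+1).choose 1 : ℕ) = m + 1 := Nat.choose_one_right _
    rw [hch, mul_smul_comm, smul_mul_assoc, Nat.factorial_succ, mul_nsmul]
    congr 1
    rw [nsmul_eq_mul]
    exact ((Nat.cast_commute (m+1) (y 0 * (List.ofFn fun i => y i.succ).prod)).eq).symm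

end ExtPart
section ExtPart2
variable {n : ℕ}

lemma omega_bubble (P Q : Idx n) (z : EA n) :
    ω P * (ω Q * z) = -(ω Q * (ω P * z)) := by
  rw [← mul_assoc, omega_anticomm, neg_mul, mul_assoc]

lemma block_comm (A B C D : Idx n) :
    (ω A * ω B) * (ω C * ω D) = (ω C * ω D) * (ω A * ω B) := by
  have inner : ω A * (ω B * ω D) = ω D * (ω A * ω B) := by
    rw [omega_anticomm B D, mul_neg, omega_bubble A D, neg_neg]
  calc (ω A * ω B) * (ω C * ω D) = ω A * (ω B * (ω C * ω D)) := by rw [mul_assoc]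
    _ = ω A * (-(ω C * (ω B * ω D))) := by rw [omega_bubble B C]
    _ = -(ω A * (ω C * (ω B * ω D))) := by rw [mul_neg]
    _ = -(-(ω C * (ω A * (ω B * ω D)))) := by rw [omega_bubble A C]
    _ = ω C * (ω A * (ω B * ω D)) := by rw [neg_neg]
    _ = ω C * (ω D * (ω A * ω B)) := by rw [inner]
    _ = (ω C * ω D) * (ω A * ω B) := by rw [mul_assoc]

lemma block_sq (A B : Idx n) : (ω A * ω B) * (ω A * ω B) = 0 := by
  calc (ω A * ω B) * (ω A * ω B) = ω A * (ω B * (ω A * ω B)) := by rw [mul_assoc]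
    _ = ω A * (-(ω A * (ω B * ω B))) := by rw [omega_bubble B A]
    _ = 0 := by rw [omega_sq, mul_zero, neg_zero, mul_zero]

lemma ofFn_smul_prod {R : Type*} [Ring R] [Algebra ℂ R] :
    ∀ (m : ℕ) (c : Fin m → ℂ) (g : Fin m → R),
    (List.ofFn fun l => c l • g l).prod = (∏ l, c l) • (List.ofFn g).prod := by
  intro m
  induction m with
  | zero => intro c g; simp
  | succ m ih =>
    intro c g
    rw [List.ofFn_succ, List.prod_cons, List.ofFn_succ (f := g), List.prod_cons,
      ih (fun l => c l.succ) (fun l => g l.succ), Fin.prod_univ_succ,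
      smul_mul_smul_comm]

lemma gamma_pow (c : Fin n → ℂ) :
    (∑ l : Fin n, c l • (ω (inl l) * ω (inr l))) ^ n
      = n.factorial • ((∏ l, c l) • Ωn n) := by
  have hcomm : ∀ i j : Fin n,
      Commute (c i • (ω (inl i) * ω (inr i))) (c j • (ω (inl j) * ω (inr j))) := by
    intro i j
    exact (Commute.smul_left (Commute.smul_right (block_comm _ _ _ _) _) _)
  have hsq : ∀ i : Fin n,
      (c i • (ω (inl i) * ω (inr i))) * (c i • (ω (inl i) * ω (inr i))) = 0 := by
    intro i
    rw [smul_mul_smul_comm, block_sq, smul_zero]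
  rw [sum_pow_eq_factorial_smul n _ hcomm hsq]
  congr 1
  rw [ofFn_smul_prod]
  rfl


end ExtPart2
section ExtPart3
variable {n : ℕ}

lemma betan_eq_Phi : βn n = Phi (Matrix.fromBlocks 0 1 0 0 : Matrix (Idx n) (Idx n) ℂ) := by
  unfold βn Phi
  rw [Fintype.sum_sum_type]
  simp only [Fintype.sum_sum_type, Matrix.fromBlocks_apply₁₁, Matrix.fromBlocks_apply₁₂,
    Matrix.fromBlocks_apply₂₁, Matrix.fromBlocks_apply₂₂, Matrix.zero_apply, zero_smul,
    Finset.sum_const_zero, add_zero, zero_add, Matrix.one_apply, ite_smul, one_smul]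
  rw [Finset.sum_congr rfl fun l _ => Finset.sum_ite_eq (Finset.univ : Finset (Fin n)) l
    (fun k => ω (inl l) * ω (inr k)) ]
  simp

lemma Phi_upper (c : Fin n → ℂ) :
    Phi (Matrix.fromBlocks 0 (Matrix.diagonal c) (-(Matrix.diagonal c)) 0)
      = (2:ℂ) • ∑ l : Fin n, c l • (ω (inl l) * ω (inr l)) := by
  unfold Phi
  rw [Fintype.sum_sum_type]
  simp only [Fintype.sum_sum_type, Matrix.fromBlocks_apply₁₁, Matrix.fromBlocks_apply₁₂,
    Matrix.fromBlocks_apply₂₁, Matrix.fromBlocks_apply₂₂, Matrix.zero_apply, zero_smul,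
    Finset.sum_const_zero, add_zero, zero_add, Matrix.neg_apply, Matrix.diagonal_apply,
    ite_smul, neg_smul, zero_smul, neg_zero, Finset.sum_ite_eq, Finset.mem_univ, if_true,
    Finset.sum_neg_distrib]
  have h2 : ∀ l : Fin n, -(c l • (ω (inr l) * ω (inl l))) = c l • (ω (inl l) * ω (inr l)) := by
    intro l; rw [omega_anticomm (inr l) (inl l), smul_neg, neg_neg]
  rw [two_smul]
  congr 1
  rw [← Finset.sum_neg_distrib]
  exact Finset.sum_congr rfl fun l _ => h2 l

lemma actE_fixes_beta (NE : Matrix (Idx n) (Idx n) ℂ) (h : NE * Jmat n * NEᵀ = Jmat n) :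
    actE NEᵀ (βn n) = βn n := by
  rw [betan_eq_Phi, actE_Phi, Matrix.transpose_transpose]
  symm
  apply Phi_eq_of_antisymm
  have hJ : (Matrix.fromBlocks 0 1 0 0 : Matrix (Idx n) (Idx n) ℂ)
      - (Matrix.fromBlocks 0 1 0 0)ᵀ = Jmat n := by
    rw [Matrix.fromBlocks_transpose, Jmat]
    ext A B
    rcases A with a | a <;> rcases B with b | b <;>
      simp [Matrix.fromBlocks, Matrix.sub_apply]
  calc (Matrix.fromBlocks 0 1 0 0 : Matrix (Idx n) (Idx n) ℂ) - (Matrix.fromBlocks 0 1 0 0)ᵀ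
      = Jmat n := hJ
    _ = NE * Jmat n * NEᵀ := h.symm
    _ = NE * ((Matrix.fromBlocks 0 1 0 0 : Matrix (Idx n) (Idx n) ℂ)
        - (Matrix.fromBlocks 0 1 0 0)ᵀ) * NEᵀ := by rw [hJ]
    _ = NE * (Matrix.fromBlocks 0 1 0 0 : Matrix (Idx n) (Idx n) ℂ) * NEᵀ
        - NE * (Matrix.fromBlocks 0 1 0 0)ᵀ * NEᵀ := by
        rw [Matrix.mul_sub, Matrix.sub_mul]
    _ = NE * (Matrix.fromBlocks 0 1 0 0 : Matrix (Idx n) (Idx n) ℂ) * NEᵀ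
        - (NE * (Matrix.fromBlocks 0 1 0 0 : Matrix (Idx n) (Idx n) ℂ) * NEᵀ)ᵀ := by
        rw [Matrix.transpose_mul, Matrix.transpose_mul, Matrix.transpose_transpose,
          Matrix.mul_assoc, Matrix.mul_assoc]

lemma betan_pow : (βn n) ^ n = n.factorial • Ωn n := by
  have h := gamma_pow (n := n) (fun _ => (1:ℂ))
  simp only [one_smul, Finset.prod_const_one] at h
  rw [← h]
  rfl

lemma actE_fixes_Omega (NE : Matrix (Idx n) (Idx n) ℂ) (h : NE * Jmat n * NEᵀ = Jmat n) :
    actE NEᵀ (Ωn n) = Ωn n := by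
  have h2 := congrArg (actE NEᵀ) (betan_pow (n := n))
  rw [map_pow, actE_fixes_beta NE h, betan_pow, map_nsmul] at h2
  have h3 : ((n.factorial : ℂ)) • Ωn n = ((n.factorial : ℂ)) • actE NEᵀ (Ωn n) := by
    rw [Nat.cast_smul_eq_nsmul, Nat.cast_smul_eq_nsmul]
    exact h2
  have := smul_right_injective (EA n)
    (Nat.cast_ne_zero.mpr (Nat.factorial_ne_zero n) : (n.factorial : ℂ) ≠ 0) h3
  exact this.symm

end ExtPart3
section TauPart

lemma qa_zero : qa 0 = 0 := by simp [qa]; rfl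
lemma qb_zero : qb 0 = 0 := by simp [qb]; rfl
lemma qa_one : qa 1 = 1 := by simp [qa]; rfl
lemma qb_one : qb 1 = 0 := by simp [qb]; rfl

lemma qa_add (p q : ℍ[ℝ]) : qa (p + q) = qa p + qa q := by
  apply Complex.ext <;> simp [qa]
lemma qb_add (p q : ℍ[ℝ]) : qb (p + q) = qb p + qb q := by
  apply Complex.ext <;> simp [qb]

/-- `qa` as an additive monoid hom. -/
def qaA : ℍ[ℝ] →+ ℂ := { toFun := qa, map_zero' := qa_zero, map_add' := qa_add }
/-- `qb` as an additive monoid hom. -/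
def qbA : ℍ[ℝ] →+ ℂ := { toFun := qb, map_zero' := qb_zero, map_add' := qb_add }

lemma qa_mul (p q : ℍ[ℝ]) :
    qa (p * q) = qa p * qa q - qb p * (starRingEnd ℂ) (qb q) := by
  apply Complex.ext <;>
    simp [qa, qb, Quaternion.re_mul, Quaternion.imI_mul, Complex.mul_re, Complex.mul_im] <;>
    ring

lemma qb_mul (p q : ℍ[ℝ]) :
    qb (p * q) = qa p * qb q + qb p * (starRingEnd ℂ) (qa q) := by
  apply Complex.ext <;>
    simp [qa, qb, Quaternion.imJ_mul, Quaternion.imK_mul, Complex.mul_re, Complex.mul_im] <;>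
    ring

lemma qa_star (p : ℍ[ℝ]) : qa (star p) = (starRingEnd ℂ) (qa p) := by
  apply Complex.ext <;> simp [qa]
lemma qb_star (p : ℍ[ℝ]) : qb (star p) = -qb p := by
  apply Complex.ext <;> simp [qb]

variable {n : ℕ}

lemma conjM_add {m k : Type*} (P Q : Matrix m k ℂ) : conjM (P + Q) = conjM P + conjM Q := by
  ext i j; simp [conjM]
lemma conjM_neg {m k : Type*} (P : Matrix m k ℂ) : conjM (-P) = -conjM P := by
  ext i j; simp [conjM]
lemma conjM_sub {m k : Type*} (P Q : Matrix m k ℂ) : conjM (P - Q) = conjM P - conjM Q := by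
  ext i j; simp [conjM]
lemma conjM_conjM {m k : Type*} (P : Matrix m k ℂ) : conjM (conjM P) = P := by
  ext i j; simp [conjM]
lemma conjM_mul {m k l : Type*} [Fintype k] (P : Matrix m k ℂ) (Q : Matrix k l ℂ) :
    conjM (P * Q) = conjM P * conjM Q := by
  ext i j
  simp [conjM, Matrix.mul_apply]
lemma conjM_transpose {m k : Type*} (P : Matrix m k ℂ) : conjM Pᵀ = (conjM P)ᵀ := by
  ext i j; simp [conjM]
lemma conjM_one {m : Type*} [DecidableEq m] [Fintype m] :
    conjM (1 : Matrix m m ℂ) = 1 := by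
  ext i j; simp [conjM, Matrix.one_apply, apply_ite (starRingEnd ℂ)]

lemma qa_sum {ι : Type*} (s : Finset ι) (f : ι → ℍ[ℝ]) :
    qa (∑ i ∈ s, f i) = ∑ i ∈ s, qa (f i) := map_sum qaA f s
lemma qb_sum {ι : Type*} (s : Finset ι) (f : ι → ℍ[ℝ]) :
    qb (∑ i ∈ s, f i) = ∑ i ∈ s, qb (f i) := map_sum qbA f s

lemma map_qa_mul (M1 M2 : Matrix (Fin n) (Fin n) ℍ[ℝ]) :
    (M1 * M2).map qa = M1.map qa * M2.map qa - M1.map qb * conjM (M2.map qb) := by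
  ext l k
  simp only [Matrix.map_apply, Matrix.sub_apply, Matrix.mul_apply, conjM]
  rw [qa_sum, ← Finset.sum_sub_distrib]
  exact Finset.sum_congr rfl fun j _ => qa_mul _ _

lemma map_qb_mul (M1 M2 : Matrix (Fin n) (Fin n) ℍ[ℝ]) :
    (M1 * M2).map qb = M1.map qa * M2.map qb + M1.map qb * conjM (M2.map qa) := by
  ext l k
  simp only [Matrix.map_apply, Matrix.add_apply, Matrix.mul_apply, conjM]
  rw [qb_sum, ← Finset.sum_add_distrib]
  exact Finset.sum_congr rfl fun j _ => qb_mul _ _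

lemma tau_mul (M1 M2 : Matrix (Fin n) (Fin n) ℍ[ℝ]) :
    tau (M1 * M2) = tau M1 * tau M2 := by
  unfold tau
  rw [Matrix.fromBlocks_multiply, map_qa_mul, map_qb_mul]
  rw [Matrix.fromBlocks_inj]
  refine ⟨by noncomm_ring, by noncomm_ring, ?_, ?_⟩
  · rw [conjM_add, conjM_mul, conjM_mul, conjM_conjM]
    abel
  · rw [conjM_sub, conjM_mul, conjM_mul, conjM_conjM]
    rw [sub_eq_add_neg, ← Matrix.mul_neg, add_comm]

lemma tau_one : tau (1 : Matrix (Fin n) (Fin n) ℍ[ℝ]) = 1 := by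
  unfold tau
  have h1 : (1 : Matrix (Fin n) (Fin n) ℍ[ℝ]).map qa = 1 := by
    ext i j; simp [Matrix.map_apply, Matrix.one_apply]
    split <;> [exact qa_one; exact qa_zero]
  have h2 : (1 : Matrix (Fin n) (Fin n) ℍ[ℝ]).map qb = 0 := by
    ext i j; simp [Matrix.map_apply, Matrix.one_apply]
    split <;> [exact qb_one; exact qb_zero]
  rw [h1, h2, conjM_one]
  have : conjM (0 : Matrix (Fin n) (Fin n) ℂ) = 0 := by ext i j; simp [conjM]
  rw [this, neg_zero, Matrix.fromBlocks_one]

lemma tau_conjTranspose (M : Matrix (Fin n) (Fin n) ℍ[ℝ]) :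
    tau Mᴴ = (tau M)ᴴ := by
  ext A B
  rcases A with i | i <;> rcases B with j | j <;>
    simp [tau, Matrix.fromBlocks, conjM, Matrix.conjTranspose_apply, Matrix.map_apply,
      qa_star, qb_star]

lemma conjM_tau (M : Matrix (Fin n) (Fin n) ℍ[ℝ]) :
    conjM (tau M) = (-(Jmat n)) * tau M * Jmat n := by
  unfold tau Jmat
  have hneg : -(Matrix.fromBlocks 0 1 (-1) 0 : Matrix (Idx n) (Idx n) ℂ)
      = Matrix.fromBlocks 0 (-1) 1 0 := by
    rw [Matrix.fromBlocks_neg]; simp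
  rw [hneg, Matrix.fromBlocks_multiply, Matrix.fromBlocks_multiply]
  have hmap : conjM (Matrix.fromBlocks (M.map qa) (-(M.map qb)) (conjM (M.map qb))
      (conjM (M.map qa))) = Matrix.fromBlocks (conjM (M.map qa)) (-(conjM (M.map qb)))
      (M.map qb) (M.map qa) := by
    ext (i|i) (j|j) <;>
      simp [conjM, Matrix.fromBlocks, Matrix.map_apply]
  rw [hmap, Matrix.fromBlocks_inj]
  refine ⟨by noncomm_ring, by noncomm_ring, by noncomm_ring, by noncomm_ring⟩

lemma Jmat_transpose : (Jmat n)ᵀ = -(Jmat n) := by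
  unfold Jmat
  rw [Matrix.fromBlocks_transpose, Matrix.fromBlocks_neg]
  simp

lemma Jmat_sq : Jmat n * Jmat n = -1 := by
  unfold Jmat
  rw [Matrix.fromBlocks_multiply, ← Matrix.fromBlocks_one, Matrix.fromBlocks_neg,
    Matrix.fromBlocks_inj]
  refine ⟨by noncomm_ring, by noncomm_ring, by noncomm_ring, by noncomm_ring⟩

end TauPart
section Analytic
variable {n : ℕ}

lemma pdR_neg (g : V4 n → ℝ) (a : Fin (4*n)) :
    pdR a (fun x => -(g x)) = fun x => -(pdR a g x) := by
  funext x
  unfold pdR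
  rw [fderiv_fun_neg]
  rfl

lemma pd_ofReal (g : V4 n → ℝ) (hg : Differentiable ℝ g) (a : Fin (4*n)) (x : V4 n) :
    pd a (fun y => ((g y : ℝ) : ℂ)) x = ((pdR a g x : ℝ) : ℂ) := by
  unfold pd pdR
  have h : fderiv ℝ (fun y => ((g y : ℝ) : ℂ)) x
      = Complex.ofRealCLM.comp (fderiv ℝ g x) :=
    (Complex.ofRealCLM.hasFDerivAt.comp x (hg x).hasFDerivAt).fderiv
  rw [h]
  rfl

variable (u : V4 n → ℝ) (hu : ContDiff ℝ 2 u) (q : V4 n)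
include hu

lemma diff_u : Differentiable ℝ u := hu.differentiable (by norm_num)

lemma diff_fderiv : Differentiable ℝ (fderiv ℝ u) :=
  (hu.fderiv_right (m := 1) (by norm_num)).differentiable (by norm_num)

lemma diff_pdR (b : Fin (4*n)) : Differentiable ℝ (pdR b u) := by
  have : (pdR b u) = fun x => (fderiv ℝ u x) (Pi.single b 1) := rfl
  rw [this]
  exact (diff_fderiv u hu).clm_apply (differentiable_const _)

lemma pdR_pdR (a b : Fin (4*n)) :
    pdR a (pdR b u) q = fderiv ℝ (fderiv ℝ u) q (Pi.single a 1) (Pi.single b 1) := by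
  unfold pdR
  rw [fderiv_clm_apply ((diff_fderiv u hu) q) (differentiableAt_const _)]
  simp

lemma hm_symm (a b : Fin (4*n)) : pdR a (pdR b u) q = pdR b (pdR a u) q := by
  rw [pdR_pdR u hu, pdR_pdR u hu]
  exact (hu.contDiffAt.isSymmSndFDerivAt (by norm_num)) _ _

/-- `pd` of a 2-term complex combination of real partials. -/
lemma pd_comb (s t : ℂ) (b c a : Fin (4*n)) :
    pd a (fun x => s * ((pdR b u x : ℝ) : ℂ) + t * ((pdR c u x : ℝ) : ℂ)) q
      = s * ((pdR a (pdR b u) q : ℝ) : ℂ) + t * ((pdR a (pdR c u) q : ℝ) : ℂ) := by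
  have hb : Differentiable ℝ (fun x => ((pdR b u x : ℝ) : ℂ)) :=
    Complex.ofRealCLM.differentiable.comp (diff_pdR u hu b)
  have hc : Differentiable ℝ (fun x => ((pdR c u x : ℝ) : ℂ)) :=
    Complex.ofRealCLM.differentiable.comp (diff_pdR u hu c)
  unfold pd
  rw [fderiv_fun_add ((hb q).const_mul s) ((hc q).const_mul t)]
  rw [ContinuousLinearMap.add_apply]
  rw [fderiv_const_mul (hb q) s, fderiv_const_mul (hc q) t]
  rw [ContinuousLinearMap.smul_apply, ContinuousLinearMap.smul_apply]
  have e1 : fderiv ℝ (fun x => ((pdR b u x : ℝ) : ℂ)) q (Pi.single a 1)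
      = ((pdR a (pdR b u) q : ℝ) : ℂ) := pd_ofReal _ (diff_pdR u hu b) a q
  have e2 : fderiv ℝ (fun x => ((pdR c u x : ℝ) : ℂ)) q (Pi.single a 1)
      = ((pdR a (pdR c u) q : ℝ) : ℂ) := pd_ofReal _ (diff_pdR u hu c) a q
  rw [e1, e2]
  simp [smul_eq_mul]

end Analytic
section Analytic2
variable {n : ℕ}

lemma pdH_mk (g0 g1 g2 g3 : V4 n → ℝ) (h0 : Differentiable ℝ g0)
    (h1 : Differentiable ℝ g1) (h2 : Differentiable ℝ g2) (h3 : Differentiable ℝ g3)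
    (a : Fin (4*n)) (q : V4 n) :
    pdH a (fun x => (⟨g0 x, g1 x, g2 x, g3 x⟩ : ℍ[ℝ])) q
      = ⟨pdR a g0 q, pdR a g1 q, pdR a g2 q, pdR a g3 q⟩ := by
  unfold pdH pdR
  have e : (fun x => (⟨g0 x, g1 x, g2 x, g3 x⟩ : ℍ[ℝ]))
      = fun x => g0 x • (1:ℍ[ℝ]) + g1 x • iH + g2 x • jH + g3 x • kH := by
    funext x
    ext <;> simp [Quaternion.re_smul] <;> simp [iH, jH, kH]
  rw [e]
  have hf : HasFDerivAt
      (fun x => g0 x • (1:ℍ[ℝ]) + g1 x • iH + g2 x • jH + g3 x • kH)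
      ((((fderiv ℝ g0 q).smulRight (1:ℍ[ℝ])) + ((fderiv ℝ g1 q).smulRight iH))
        + (((fderiv ℝ g2 q).smulRight jH) + ((fderiv ℝ g3 q).smulRight kH))) q := by
    have := ((((h0 q).hasFDerivAt.smul_const (1:ℍ[ℝ])).add
      ((h1 q).hasFDerivAt.smul_const iH)).add
      (((h2 q).hasFDerivAt.smul_const jH).add ((h3 q).hasFDerivAt.smul_const kH)))
    refine this.congr_of_eventuallyEq (Filter.Eventually.of_forall fun x => ?_)
    simp only [Pi.add_apply]
    abel
  rw [hf.fderiv]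
  simp only [ContinuousLinearMap.add_apply, ContinuousLinearMap.smulRight_apply]
  ext <;> simp [Quaternion.re_smul] <;> simp [iH, jH, kH]

lemma Hess_entry (u : V4 n → ℝ) (hu : ContDiff ℝ 2 u) (q : V4 n) (l k : Fin n) :
    Hess u q l k =
      ⟨pdR (X l 0) (pdR (X k 0) u) q + pdR (X l 1) (pdR (X k 1) u) q
          + pdR (X l 2) (pdR (X k 2) u) q + pdR (X l 3) (pdR (X k 3) u) q,
        pdR (X l 1) (pdR (X k 0) u) q - pdR (X l 0) (pdR (X k 1) u) q
          + pdR (X l 3) (pdR (X k 2) u) q - pdR (X l 2) (pdR (X k 3) u) q,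
        pdR (X l 2) (pdR (X k 0) u) q - pdR (X l 3) (pdR (X k 1) u) q
          - pdR (X l 0) (pdR (X k 2) u) q + pdR (X l 1) (pdR (X k 3) u) q,
        pdR (X l 3) (pdR (X k 0) u) q + pdR (X l 2) (pdR (X k 1) u) q
          - pdR (X l 1) (pdR (X k 2) u) q - pdR (X l 0) (pdR (X k 3) u) q⟩ := by
  have hpdH : ∀ a : Fin (4*n), pdH a (dq k u) q
      = ⟨pdR a (pdR (X k 0) u) q, -pdR a (pdR (X k 1) u) q,
          -pdR a (pdR (X k 2) u) q, -pdR a (pdR (X k 3) u) q⟩ := by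
    intro a
    have e : dq k u = fun x => (⟨pdR (X k 0) u x, -pdR (X k 1) u x,
        -pdR (X k 2) u x, -pdR (X k 3) u x⟩ : ℍ[ℝ]) := rfl
    rw [e, pdH_mk _ _ _ _ (diff_pdR u hu _) (diff_pdR u hu _).fun_neg
      (diff_pdR u hu _).fun_neg (diff_pdR u hu _).fun_neg]
    have hn : ∀ b : Fin (4*n), pdR a (fun x => -(pdR b u x)) q = -pdR a (pdR b u) q := by
      intro b
      rw [show (fun x => -(pdR b u x)) = fun x => -(pdR b u) x from rfl]
      rw [pdR_neg (pdR b u) a]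
    rw [hn, hn, hn]
  show dqbar l (dq k u) q = _
  unfold dqbar
  ext <;>
    simp only [Quaternion.re_add, Quaternion.imI_add, Quaternion.imJ_add, Quaternion.imK_add, Quaternion.re_mul, Quaternion.imI_mul, Quaternion.imJ_mul, Quaternion.imK_mul] <;> simp [hpdH, iH, jH, kH] <;> ring

end Analytic2
section Analytic3
variable {n : ℕ}

/-- real→complex second partial -/
def hc2 (u : V4 n → ℝ) (q : V4 n) (a b : Fin (4*n)) : ℂ := ((pdR a (pdR b u) q : ℝ) : ℂ)

lemma nabla_inl0 (l : Fin n) (f : V4 n → ℂ) :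
    nabla (inl l) 0 f = fun x => pd (X l 0) f x + Complex.I * pd (X l 1) f x := rfl
lemma nabla_inl1 (l : Fin n) (f : V4 n → ℂ) :
    nabla (inl l) 1 f = fun x => -pd (X l 2) f x - Complex.I * pd (X l 3) f x := rfl
lemma nabla_inr0 (l : Fin n) (f : V4 n → ℂ) :
    nabla (inr l) 0 f = fun x => pd (X l 2) f x - Complex.I * pd (X l 3) f x := rfl
lemma nabla_inr1 (l : Fin n) (f : V4 n → ℂ) :
    nabla (inr l) 1 f = fun x => pd (X l 0) f x - Complex.I * pd (X l 1) f x := rfl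

variable (u : V4 n → ℝ) (hu : ContDiff ℝ 2 u) (q : V4 n)
include hu

lemma nabla1_inl_eq (k : Fin n) : nabla (inl k) 1 (fun x => ((u x : ℝ) : ℂ))
    = fun x => (-1 : ℂ) * ((pdR (X k 2) u x : ℝ) : ℂ)
        + (-Complex.I) * ((pdR (X k 3) u x : ℝ) : ℂ) := by
  rw [nabla_inl1]
  funext x
  rw [pd_ofReal u (diff_u u hu) _ x, pd_ofReal u (diff_u u hu) _ x]
  ring

lemma nabla1_inr_eq (k : Fin n) : nabla (inr k) 1 (fun x => ((u x : ℝ) : ℂ))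
    = fun x => (1 : ℂ) * ((pdR (X k 0) u x : ℝ) : ℂ)
        + (-Complex.I) * ((pdR (X k 1) u x : ℝ) : ℂ) := by
  rw [nabla_inr1]
  funext x
  rw [pd_ofReal u (diff_u u hu) _ x, pd_ofReal u (diff_u u hu) _ x]
  ring

lemma nn_ll (l k : Fin n) :
    nabla (inl l) 0 (nabla (inl k) 1 (fun x => ((u x : ℝ) : ℂ))) q
      = -hc2 u q (X l 0) (X k 2) - Complex.I * hc2 u q (X l 0) (X k 3)
        - Complex.I * hc2 u q (X l 1) (X k 2) + hc2 u q (X l 1) (X k 3) := by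
  rw [nabla1_inl_eq u hu, nabla_inl0]
  beta_reduce
  rw [pd_comb u hu q, pd_comb u hu q]
  unfold hc2
  linear_combination (-((pdR (X l 1) (pdR (X k 3) u) q : ℝ) : ℂ)) * Complex.I_sq

lemma nn_lr (l k : Fin n) :
    nabla (inl l) 0 (nabla (inr k) 1 (fun x => ((u x : ℝ) : ℂ))) q
      = hc2 u q (X l 0) (X k 0) - Complex.I * hc2 u q (X l 0) (X k 1)
        + Complex.I * hc2 u q (X l 1) (X k 0) + hc2 u q (X l 1) (X k 1) := by
  rw [nabla1_inr_eq u hu, nabla_inl0]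
  beta_reduce
  rw [pd_comb u hu q, pd_comb u hu q]
  unfold hc2
  linear_combination (-((pdR (X l 1) (pdR (X k 1) u) q : ℝ) : ℂ)) * Complex.I_sq

lemma nn_rl (l k : Fin n) :
    nabla (inr l) 0 (nabla (inl k) 1 (fun x => ((u x : ℝ) : ℂ))) q
      = -hc2 u q (X l 2) (X k 2) - Complex.I * hc2 u q (X l 2) (X k 3)
        + Complex.I * hc2 u q (X l 3) (X k 2) - hc2 u q (X l 3) (X k 3) := by
  rw [nabla1_inl_eq u hu, nabla_inr0]
  beta_reduce
  rw [pd_comb u hu q, pd_comb u hu q]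
  unfold hc2
  linear_combination (((pdR (X l 3) (pdR (X k 3) u) q : ℝ) : ℂ)) * Complex.I_sq

lemma nn_rr (l k : Fin n) :
    nabla (inr l) 0 (nabla (inr k) 1 (fun x => ((u x : ℝ) : ℂ))) q
      = hc2 u q (X l 2) (X k 0) - Complex.I * hc2 u q (X l 2) (X k 1)
        - Complex.I * hc2 u q (X l 3) (X k 0) - hc2 u q (X l 3) (X k 1) := by
  rw [nabla1_inr_eq u hu, nabla_inr0]
  beta_reduce
  rw [pd_comb u hu q, pd_comb u hu q]
  unfold hc2
  linear_combination (((pdR (X l 3) (pdR (X k 1) u) q : ℝ) : ℂ)) * Complex.I_sq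

end Analytic3
section Analytic4
variable {n : ℕ}

lemma mul_J_inl (C : Matrix (Idx n) (Idx n) ℂ) (A : Idx n) (b : Fin n) :
    (C * Jmat n) A (inl b) = -C A (inr b) := by
  rw [Matrix.mul_apply, Fintype.sum_sum_type]
  simp [Jmat, Matrix.fromBlocks, Matrix.one_apply, mul_ite, Finset.sum_ite_eq']

lemma mul_J_inr (C : Matrix (Idx n) (Idx n) ℂ) (A : Idx n) (b : Fin n) :
    (C * Jmat n) A (inr b) = C A (inl b) := by
  rw [Matrix.mul_apply, Fintype.sum_sum_type]
  simp [Jmat, Matrix.fromBlocks, Matrix.one_apply, mul_ite, Finset.sum_ite_eq']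

variable (u : V4 n → ℝ) (hu : ContDiff ℝ 2 u) (q : V4 n)
include hu

lemma hc2_swap (a b : Fin (4*n)) : hc2 u q a b = hc2 u q b a :=
  congrArg Complex.ofReal (hm_symm u hu q a b)

lemma Delta_ll (l k : Fin n) :
    Delta (inl l) (inl k) u q = (1/2 : ℂ) * qb (Hess u q l k) := by
  unfold Delta
  rw [nn_ll u hu q l k, nn_ll u hu q k l]
  rw [hc2_swap u hu q (X k 0) (X l 2), hc2_swap u hu q (X k 0) (X l 3),
    hc2_swap u hu q (X k 1) (X l 2), hc2_swap u hu q (X k 1) (X l 3)]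
  rw [Hess_entry u hu q l k]
  show _ = (1/2 : ℂ) * (⟨_, _⟩ : ℂ)
  rw [Complex.mk_eq_add_mul_I]
  unfold hc2
  push_cast
  ring

lemma Delta_lr (l k : Fin n) :
    Delta (inl l) (inr k) u q = (1/2 : ℂ) * qa (Hess u q l k) := by
  unfold Delta
  rw [nn_lr u hu q l k, nn_rl u hu q k l]
  rw [hc2_swap u hu q (X k 2) (X l 2), hc2_swap u hu q (X k 2) (X l 3),
    hc2_swap u hu q (X k 3) (X l 2), hc2_swap u hu q (X k 3) (X l 3)]
  rw [Hess_entry u hu q l k]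
  show _ = (1/2 : ℂ) * (⟨_, _⟩ : ℂ)
  rw [Complex.mk_eq_add_mul_I]
  unfold hc2
  push_cast
  ring

lemma Delta_rl (l k : Fin n) :
    Delta (inr l) (inl k) u q = -((1/2 : ℂ) * (starRingEnd ℂ) (qa (Hess u q l k))) := by
  unfold Delta
  rw [nn_rl u hu q l k, nn_lr u hu q k l]
  rw [hc2_swap u hu q (X k 0) (X l 0), hc2_swap u hu q (X k 0) (X l 1),
    hc2_swap u hu q (X k 1) (X l 0), hc2_swap u hu q (X k 1) (X l 1)]
  rw [Hess_entry u hu q l k]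
  have hconj : ∀ a b : ℝ, (starRingEnd ℂ) (⟨a, b⟩ : ℂ) = (⟨a, -b⟩ : ℂ) := by
    intro a b; apply Complex.ext <;> simp
  show _ = -((1/2 : ℂ) * (starRingEnd ℂ) (⟨_, _⟩ : ℂ))
  rw [hconj, Complex.mk_eq_add_mul_I]
  unfold hc2
  push_cast
  ring

lemma Delta_rr (l k : Fin n) :
    Delta (inr l) (inr k) u q = (1/2 : ℂ) * (starRingEnd ℂ) (qb (Hess u q l k)) := by
  unfold Delta
  rw [nn_rr u hu q l k, nn_rr u hu q k l]
  rw [hc2_swap u hu q (X k 2) (X l 0), hc2_swap u hu q (X k 2) (X l 1),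
    hc2_swap u hu q (X k 3) (X l 0), hc2_swap u hu q (X k 3) (X l 1)]
  rw [Hess_entry u hu q l k]
  have hconj : ∀ a b : ℝ, (starRingEnd ℂ) (⟨a, b⟩ : ℂ) = (⟨a, -b⟩ : ℂ) := by
    intro a b; apply Complex.ext <;> simp
  show _ = (1/2 : ℂ) * (starRingEnd ℂ) (⟨_, _⟩ : ℂ)
  rw [hconj, Complex.mk_eq_add_mul_I]
  unfold hc2
  push_cast
  ring

end Analytic4
section FinalAssembly
variable {n : ℕ}

lemma DeltaMatrix (u : V4 n → ℝ) (hu : ContDiff ℝ 2 u) (q : V4 n) :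
    (Matrix.of fun A B => Delta A B u q) = (1/2 : ℂ) • (tau (Hess u q) * Jmat n) := by
  ext A B
  rcases B with k | k
  · rw [Matrix.smul_apply, mul_J_inl, Matrix.of_apply]
    rcases A with l | l
    · have ht : tau (Hess u q) (inl l) (inr k) = -qb (Hess u q l k) := rfl
      rw [ht, Delta_ll u hu q, smul_eq_mul]; ring
    · have ht : tau (Hess u q) (inr l) (inr k) = (starRingEnd ℂ) (qa (Hess u q l k)) := rfl
      rw [ht, Delta_rl u hu q, smul_eq_mul]; ring
  · rw [Matrix.smul_apply, mul_J_inr, Matrix.of_apply]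
    rcases A with l | l
    · have ht : tau (Hess u q) (inl l) (inl k) = qa (Hess u q l k) := rfl
      rw [ht, Delta_lr u hu q, smul_eq_mul]
    · have ht : tau (Hess u q) (inr l) (inl k) = (starRingEnd ℂ) (qb (Hess u q l k)) := rfl
      rw [ht, Delta_rr u hu q, smul_eq_mul]

lemma conjM_zero {m k : Type*} : conjM (0 : Matrix m k ℂ) = 0 := by
  ext i j; simp [conjM]

lemma conjM_diag_real (c : Fin n → ℝ) :
    conjM (Matrix.diagonal fun i => ((c i : ℝ) : ℂ)) = Matrix.diagonal fun i => ((c i : ℝ) : ℂ) := by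
  ext i j
  simp [conjM, Matrix.diagonal_apply, apply_ite (starRingEnd ℂ)]

lemma tau_diag (ν : Fin n → ℝ) :
    tau (Matrix.diagonal fun i => ((ν i : ℝ) : ℍ[ℝ]))
      = Matrix.fromBlocks (Matrix.diagonal fun i => ((ν i : ℝ) : ℂ)) 0 0
          (Matrix.diagonal fun i => ((ν i : ℝ) : ℂ)) := by
  unfold tau
  have hqa : ∀ r : ℝ, qa ((r : ℝ) : ℍ[ℝ]) = (r : ℂ) := by
    intro r; apply Complex.ext <;> simp [qa]
  have hqb : ∀ r : ℝ, qb ((r : ℝ) : ℍ[ℝ]) = 0 := by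
    intro r; apply Complex.ext <;> simp [qb]
  have ha : (Matrix.diagonal fun i => ((ν i : ℝ) : ℍ[ℝ])).map qa
      = Matrix.diagonal fun i => ((ν i : ℝ) : ℂ) := by
    ext i j
    simp [Matrix.map_apply, Matrix.diagonal_apply, apply_ite qa, qa_zero, hqa]
  have hb : (Matrix.diagonal fun i => ((ν i : ℝ) : ℍ[ℝ])).map qb = 0 := by
    ext i j
    simp [Matrix.map_apply, Matrix.diagonal_apply, apply_ite qb, qb_zero, hqb]
  rw [ha, hb, conjM_zero, conjM_diag_real, neg_zero]

lemma DJ (c : Fin n → ℂ) :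
    (Matrix.fromBlocks (Matrix.diagonal c) 0 0 (Matrix.diagonal c)) * Jmat n
      = Matrix.fromBlocks 0 (Matrix.diagonal c) (-(Matrix.diagonal c)) 0 := by
  unfold Jmat
  rw [Matrix.fromBlocks_multiply, Matrix.fromBlocks_inj]
  refine ⟨by noncomm_ring, by noncomm_ring, by noncomm_ring, by noncomm_ring⟩

lemma tauEH (E : Matrix (Fin n) (Fin n) ℍ[ℝ]) :
    (tau E)ᴴ = (-(Jmat n)) * (tau E)ᵀ * Jmat n := by
  have h3 : (tau E)ᴴ = (conjM (tau E))ᵀ := by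
    ext i j; simp [conjM, Matrix.conjTranspose_apply]
  rw [h3, conjM_tau, Matrix.transpose_mul, Matrix.transpose_mul, Jmat_transpose,
    Matrix.transpose_neg, Jmat_transpose, neg_neg, Matrix.mul_assoc]

lemma tauE_symp (E : Matrix (Fin n) (Fin n) ℍ[ℝ]) (hE2 : E * Eᴴ = 1) :
    tau E * Jmat n * (tau E)ᵀ = Jmat n := by
  have h1 : tau E * tau Eᴴ = 1 := by rw [← tau_mul, hE2, tau_one]
  rw [tau_conjTranspose, tauEH] at h1
  -- h1 : tau E * ((-J) * (tau E)ᵀ * J) = 1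
  have h4 := congrArg (· * Jmat n) h1
  have h5 : tau E * (-(Jmat n) * (tau E)ᵀ * Jmat n) * Jmat n
      = -(tau E * Jmat n * (tau E)ᵀ) * (Jmat n * Jmat n) := by noncomm_ring
  rw [h5, Jmat_sq] at h4
  simp only [Matrix.mul_neg, Matrix.mul_one, neg_neg, Matrix.one_mul] at h4
  exact h4

theorem stmt11_aux (u : V4 n → ℝ) (hu : ContDiff ℝ 2 u) (q : V4 n)
    (E : Matrix (Fin n) (Fin n) ℍ[ℝ]) (hE1 : Eᴴ * E = 1) (hE2 : E * Eᴴ = 1)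
    (ν : Fin n → ℝ)
    (hdiag : Eᴴ * Hess u q * E = Matrix.diagonal (fun i => ((ν i : ℝ) : ℍ[ℝ]))) :
    (Baston u q) ^ n = ((n.factorial : ℂ) * (((∏ i, ν i : ℝ) : ℝ) : ℂ)) • Ωn n := by
  have hH : Hess u q = E * (Matrix.diagonal fun i => ((ν i : ℝ) : ℍ[ℝ])) * Eᴴ := by
    calc Hess u q = (E * Eᴴ) * Hess u q * (E * Eᴴ) := by
          rw [hE2, Matrix.one_mul, Matrix.mul_one]
      _ = E * (Eᴴ * Hess u q * E) * Eᴴ := by noncomm_ring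
      _ = E * (Matrix.diagonal fun i => ((ν i : ℝ) : ℍ[ℝ])) * Eᴴ := by rw [hdiag]
  have hMmat : (1/2 : ℂ) • (tau (Hess u q) * Jmat n)
      = ((tau E)ᵀ)ᵀ * ((1/2 : ℂ) • Matrix.fromBlocks 0
          (Matrix.diagonal fun i => ((ν i : ℝ) : ℂ))
          (-(Matrix.diagonal fun i => ((ν i : ℝ) : ℂ))) 0) * (tau E)ᵀ := by
    rw [Matrix.transpose_transpose]
    rw [hH, tau_mul, tau_mul, tau_conjTranspose, tau_diag, tauEH]
    have key : ∀ (A D T J : Matrix (Idx n) (Idx n) ℂ), J * J = -1 →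
        A * D * ((-J) * T * J) * J = A * (D * J) * T := by
      intro A D T J h
      calc A * D * ((-J) * T * J) * J = -(A * (D * J) * T) * (J * J) := by noncomm_ring
        _ = A * (D * J) * T := by rw [h]; simp [Matrix.mul_neg]
    rw [key (tau E) _ ((tau E)ᵀ) (Jmat n) Jmat_sq, DJ]
    rw [Matrix.mul_smul, Matrix.smul_mul]
  have hB : Baston u q = actE (tau E)ᵀ
      (∑ l : Fin n, ((ν l : ℝ) : ℂ) • (ω (inl l) * ω (inr l))) := by
    have h1 : Baston u q = Phi (Matrix.of fun A B => Delta A B u q) := rfl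
    rw [h1, DeltaMatrix u hu q, hMmat, ← actE_Phi, Phi_smul, Phi_upper, smul_smul]
    norm_num
  rw [hB, ← map_pow, gamma_pow, map_nsmul, _root_.map_smul,
    actE_fixes_Omega (tau E) (tauE_symp E hE2)]
  rw [← Nat.cast_smul_eq_nsmul ℂ, smul_smul]
  rw [Complex.ofReal_prod]

end FinalAssembly

/-- if 𝓔*·H_u(q)·𝓔 = diag(ν₀,…,ν_{n−1}) with 𝓔 quaternionic unitary,
then (Δu(q))^∧n = n!·(ν₀⋯ν_{n−1})·Ω_{2n}. -/
theorem stmt_11 {n : ℕ} (u : V4 n → ℝ) (hu : ContDiff ℝ 2 u) (q : V4 n)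
    (E : Matrix (Fin n) (Fin n) ℍ[ℝ]) (hE1 : Eᴴ * E = 1) (hE2 : E * Eᴴ = 1)
    (ν : Fin n → ℝ)
    (hdiag : Eᴴ * Hess u q * E = Matrix.diagonal (fun i => ((ν i : ℝ) : ℍ[ℝ]))) :
    (Baston u q) ^ n = ((n.factorial : ℂ) * (((∏ i, ν i : ℝ) : ℝ) : ℂ)) • Ωn n :=
  stmt11_aux u hu q E hE1 hE2 ν hdiag

end
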